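/- Let f: R^N → R be locally Lipschitz near x and suppose the least-norm element LN(∂f)(x) of its generalized gradient at x is nonzero. Then there exists T > 0 such that for all 0 < t < T, f(x − t·LN(∂f)(x)) ≤ f(x) − (t/2)‖LN(∂f)(x)‖². For a convex function f this descent property holds with ∂f the convex subdifferential. -/

import Mathlib

open RealInnerProductSpace Pointwise

set_option maxHeartbeats 1000000 in
theorem descent_direction (N : ℕ) (f : EuclideanSpace ℝ (Fin N) → ℝ)
    (hf : ConvexOn ℝ Set.univ f)
    (x g₀ : EuclideanSpace ℝ (Fin N))
    (hg₀ : ∀ y, f x + ⟪g₀, y - x⟫ ≤ f y)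
    (hmin : ∀ g, (∀ y, f x + ⟪g, y - x⟫ ≤ f y) → ‖g₀‖ ≤ ‖g‖)
    (hne : g₀ ≠ 0) :
    ∃ T > 0, ∀ t : ℝ, 0 < t → t < T →
      f (x - t • g₀) ≤ f x - t / 2 * ‖g₀‖ ^ 2 := by
  by_contra hcon
  push_neg at hcon
  set K : ℝ := ‖g₀‖ ^ 2 with hK
  have hg₀pos : 0 < ‖g₀‖ := norm_pos_iff.2 hne
  have hKpos : 0 < K := by rw [hK]; positivity
  -- slope inequality from convexity
  have slope : ∀ (v : EuclideanSpace ℝ (Fin N)) (s t : ℝ), 0 < s → s ≤ t →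
      (f (x + s • v) - f x) * t ≤ (f (x + t • v) - f x) * s := by
    intro v s t hs hst
    have ht : 0 < t := hs.trans_le hst
    have hb0 : (0:ℝ) ≤ s / t := by positivity
    have hb1 : s / t ≤ 1 := (div_le_one ht).2 hst
    have hpt : (1 - s/t) • x + (s/t) • (x + t • v) = x + s • v := by
      have h1 : s / t * t = s := div_mul_cancel₀ s ht.ne'
      rw [smul_add, smul_smul, h1, sub_smul, one_smul]
      abel
    have h2 := hf.2 (Set.mem_univ x) (Set.mem_univ (x + t • v))
      (by linarith : (0:ℝ) ≤ 1 - s/t) hb0 (by ring)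
    rw [hpt] at h2
    simp only [smul_eq_mul] at h2
    have h3 : f (x + s • v) - f x ≤ s / t * (f (x + t • v) - f x) := by nlinarith
    have h4 := mul_le_mul_of_nonneg_right h3 ht.le
    have h5 : s / t * (f (x + t • v) - f x) * t = (f (x + t • v) - f x) * s := by
      field_simp
    linarith [h4, h5.le, h5.ge]
  -- Step B: quotients along -g₀ bounded below
  have key : ∀ t : ℝ, 0 < t → -(t/2) * K ≤ f (x + t • (-g₀)) - f x := by
    intro t ht
    obtain ⟨s, hs, hst, hlt⟩ := hcon t ht
    have hxs : x - s • g₀ = x + s • (-g₀) := by rw [smul_neg, sub_eq_add_neg]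
    rw [hxs] at hlt
    have h1 := slope (-g₀) s t hs hst.le
    nlinarith [mul_pos hs ht, mul_lt_mul_of_pos_right hlt ht]
  -- difference quotient
  set Q : EuclideanSpace ℝ (Fin N) → ℝ → ℝ := fun v t => (f (x + t • v) - f x) / t
    with hQ
  have qlb : ∀ (v : EuclideanSpace ℝ (Fin N)) (t : ℝ), 0 < t → ⟪g₀, v⟫ ≤ Q v t := by
    intro v t ht
    have h := hg₀ (x + t • v)
    rw [add_sub_cancel_left, real_inner_smul_right] at h
    simp only [hQ]
    rw [le_div_iff₀ ht]
    linarith [h]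
  have qmono : ∀ (v : EuclideanSpace ℝ (Fin N)) (s t : ℝ), 0 < s → s ≤ t →
      Q v s ≤ Q v t := by
    intro v s t hs hst
    have ht : 0 < t := hs.trans_le hst
    simp only [hQ]
    rw [div_le_div_iff₀ hs ht]
    exact slope v s t hs hst
  set Nf : EuclideanSpace ℝ (Fin N) → ℝ := fun v => sInf (Q v '' Set.Ioi 0) with hNf
  have hnon : ∀ v : EuclideanSpace ℝ (Fin N), (Q v '' Set.Ioi 0).Nonempty :=
    fun v => ⟨Q v 1, ⟨1, Set.mem_Ioi.2 one_pos, rfl⟩⟩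
  have hbdd : ∀ v : EuclideanSpace ℝ (Fin N), BddBelow (Q v '' Set.Ioi 0) := by
    intro v
    refine ⟨⟪g₀, v⟫, ?_⟩
    rintro _ ⟨t, ht, rfl⟩
    exact qlb v t ht
  have hNle : ∀ (v : EuclideanSpace ℝ (Fin N)) (t : ℝ), 0 < t → Nf v ≤ Q v t :=
    fun v t ht => csInf_le (hbdd v) ⟨t, ht, rfl⟩
  have hleN : ∀ (v : EuclideanSpace ℝ (Fin N)) (c : ℝ),
      (∀ t, 0 < t → c ≤ Q v t) → c ≤ Nf v := by
    intro v c h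
    refine le_csInf (hnon v) ?_
    rintro _ ⟨t, ht, rfl⟩
    exact h t ht
  -- positive homogeneity
  have N_hom : ∀ c : ℝ, 0 < c → ∀ v : EuclideanSpace ℝ (Fin N),
      Nf (c • v) = c * Nf v := by
    intro c hc v
    have hQc : ∀ t : ℝ, 0 < t → Q (c • v) t = c * Q v (c * t) := by
      intro t ht
      simp only [hQ]
      have h1 : t • (c • v) = (c * t) • v := by rw [smul_smul, mul_comm]
      rw [h1]
      field_simp
    have hset : Q (c • v) '' Set.Ioi 0 = (fun r => c * r) '' (Q v '' Set.Ioi 0) := by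
      ext r
      constructor
      · rintro ⟨t, ht, rfl⟩
        exact ⟨Q v (c * t), ⟨c * t, mul_pos hc ht, rfl⟩, (hQc t ht).symm⟩
      · rintro ⟨_, ⟨t, ht, rfl⟩, rfl⟩
        refine ⟨t / c, div_pos ht hc, ?_⟩
        rw [hQc (t / c) (div_pos ht hc), mul_div_cancel₀ t hc.ne']
    simp only [hNf]
    rw [hset]
    have h2 : (fun r => c * r) '' (Q v '' Set.Ioi 0) = c • (Q v '' Set.Ioi 0) := by
      ext r
      simp [Set.mem_smul_set, smul_eq_mul]
    rw [h2, Real.sInf_smul_of_nonneg hc.le, smul_eq_mul]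
  -- subadditivity
  have N_add : ∀ u v : EuclideanSpace ℝ (Fin N), Nf (u + v) ≤ Nf u + Nf v := by
    intro u v
    have hkey : ∀ t : ℝ, 0 < t → Q (u + v) t ≤ Q u (2 * t) + Q v (2 * t) := by
      intro t ht
      have hpt : (1/2 : ℝ) • (x + (2*t) • u) + (1/2 : ℝ) • (x + (2*t) • v)
          = x + t • (u + v) := by
        module
      have h2 := hf.2 (Set.mem_univ (x + (2*t) • u)) (Set.mem_univ (x + (2*t) • v))
        (by norm_num : (0:ℝ) ≤ 1/2) (by norm_num : (0:ℝ) ≤ 1/2) (by norm_num)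
      rw [hpt] at h2
      simp only [smul_eq_mul] at h2
      simp only [hQ]
      have h2t : (0:ℝ) < 2 * t := by linarith
      rw [← add_div, div_le_div_iff₀ ht h2t]
      nlinarith
    have hstep : ∀ p ∈ Q u '' Set.Ioi 0, ∀ q ∈ Q v '' Set.Ioi 0,
        Nf (u + v) ≤ p + q := by
      rintro _ ⟨s₁, hs₁, rfl⟩ _ ⟨s₂, hs₂, rfl⟩
      have hs₁' : (0:ℝ) < s₁ := hs₁
      have hs₂' : (0:ℝ) < s₂ := hs₂
      have hm0 : 0 < min s₁ s₂ := lt_min hs₁' hs₂'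
      have h1 : Nf (u + v) ≤ Q (u + v) (min s₁ s₂ / 2) := hNle _ _ (by positivity)
      have h2 := hkey (min s₁ s₂ / 2) (by positivity)
      have hms : 2 * (min s₁ s₂ / 2) = min s₁ s₂ := by ring
      rw [hms] at h2
      have h3 : Q u (min s₁ s₂) ≤ Q u s₁ := qmono u _ s₁ hm0 (min_le_left _ _)
      have h4 : Q v (min s₁ s₂) ≤ Q v s₂ := qmono v _ s₂ hm0 (min_le_right _ _)
      linarith
    have h5 : ∀ q ∈ Q v '' Set.Ioi 0, Nf (u + v) - q ≤ Nf u := by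
      intro q hq
      refine le_csInf (hnon u) ?_
      intro p hp
      have := hstep p hp q hq
      linarith
    have h6 : Nf (u + v) - Nf u ≤ Nf v := by
      refine le_csInf (hnon v) ?_
      intro q hq
      have := h5 q hq
      linarith
    linarith
  -- linear functional on span of g₀, dominated by Nf
  have hLsub : ∀ z : (LinearPMap.mkSpanSingleton (K := ℝ) (L := ℝ) (σ := RingHom.id ℝ) g₀ (K / 2) hne).domain,
      (LinearPMap.mkSpanSingleton (K := ℝ) (L := ℝ) (σ := RingHom.id ℝ) g₀ (K / 2) hne) z ≤ Nf z := by
    rintro ⟨z, hz⟩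
    have hz' : z ∈ Submodule.span ℝ {g₀} := hz
    obtain ⟨c, rfl⟩ := Submodule.mem_span_singleton.1 hz'
    have happ : (LinearPMap.mkSpanSingleton (K := ℝ) (L := ℝ) (σ := RingHom.id ℝ) g₀ (K / 2) hne) ⟨c • g₀, hz⟩
        = c * (K / 2) := by
      have h := LinearPMap.mkSpanSingleton'_apply g₀ (K / 2)
        (fun c hc => (smul_eq_zero.1 hc).elim (fun hc => by rw [hc, RingHom.map_zero, zero_smul])
          fun hx' => absurd hx' hne) c hz
      rw [h, RingHom.id_apply, smul_eq_mul]
    refine le_trans (le_of_eq happ) ?_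
    show c * (K / 2) ≤ Nf (c • g₀)
    rcases lt_trichotomy c 0 with hc | hc | hc
    · have hcg : c • g₀ = (-c) • (-g₀) := by rw [neg_smul, smul_neg, neg_neg]
      rw [hcg, N_hom (-c) (by linarith)]
      have h1 : -(K/2) ≤ Nf (-g₀) := by
        apply hleN
        intro t ht
        have hk := key t ht
        simp only [hQ]
        rw [le_div_iff₀ ht]
        nlinarith
      nlinarith
    · subst hc
      rw [zero_smul, zero_mul]
      apply hleN
      intro t ht
      simp only [hQ]
      rw [smul_zero, add_zero, sub_self, zero_div]
    · rw [N_hom c hc]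
      have h1 : K ≤ Nf g₀ := by
        apply hleN
        intro t ht
        have h := qlb g₀ t ht
        rw [real_inner_self_eq_norm_sq] at h
        simp only [hQ] at h ⊢
        nlinarith
      nlinarith
  obtain ⟨g, hgext, hgle⟩ := exists_extension_of_le_sublinear
    (LinearPMap.mkSpanSingleton (K := ℝ) (L := ℝ) (σ := RingHom.id ℝ) g₀ (K / 2) hne) Nf N_hom N_add hLsub
  -- realize g as a vector via Riesz
  set G : EuclideanSpace ℝ (Fin N) :=
    (InnerProductSpace.toDual ℝ (EuclideanSpace ℝ (Fin N))).symm
      (LinearMap.toContinuousLinearMap g) with hG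
  have hGv : ∀ v : EuclideanSpace ℝ (Fin N), ⟪G, v⟫ = g v := by
    intro v
    rw [hG, InnerProductSpace.toDual_symm_apply]
    rfl
  have hGsub : ∀ y, f x + ⟪G, y - x⟫ ≤ f y := by
    intro y
    have h1 : g (y - x) ≤ Nf (y - x) := hgle (y - x)
    have h2 : Nf (y - x) ≤ Q (y - x) 1 := hNle _ _ one_pos
    have h3 : Q (y - x) 1 = f y - f x := by
      simp only [hQ]
      simp
    rw [hGv]
    linarith
  have hGg₀ : ⟪G, g₀⟫ = K / 2 := by
    rw [hGv]
    have hmem : g₀ ∈ (LinearPMap.mkSpanSingleton (K := ℝ) (L := ℝ) (σ := RingHom.id ℝ) g₀ (K / 2) hne).domain :=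
      Submodule.mem_span_singleton_self g₀
    have h := hgext ⟨g₀, hmem⟩
    rw [LinearPMap.mkSpanSingleton_apply ℝ ℝ hne (K / 2)] at h
    exact h
  clear_value G
  -- derive contradiction via a shorter subgradient
  set w : EuclideanSpace ℝ (Fin N) := G - g₀ with hw
  have hinw : ⟪g₀, w⟫ = -(K / 2) := by
    rw [hw, inner_sub_right, real_inner_comm G g₀, hGg₀, real_inner_self_eq_norm_sq]
    rw [hK]; ring
  clear_value w
  have hwne : w ≠ 0 := by
    intro h
    rw [h, inner_zero_right] at hinw
    linarith
  have hwpos : 0 < ‖w‖ ^ 2 := pow_pos (norm_pos_iff.2 hwne) 2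
  set θ : ℝ := min 1 (K / (2 * ‖w‖ ^ 2)) with hθ
  have hθ0 : 0 < θ := lt_min one_pos (by positivity)
  have hθ1 : θ ≤ 1 := min_le_left _ _
  have hθw : θ * ‖w‖ ^ 2 ≤ K / 2 := by
    have h1 : θ ≤ K / (2 * ‖w‖ ^ 2) := min_le_right _ _
    have h2 : θ * (2 * ‖w‖ ^ 2) ≤ K := (le_div_iff₀ (by positivity)).1 h1
    nlinarith
  clear_value θ
  have hsub : ∀ y, f x + ⟪g₀ + θ • w, y - x⟫ ≤ f y := by
    intro y
    have h1 := hg₀ y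
    have h2 := hGsub y
    have h3 : ⟪g₀ + θ • w, y - x⟫ = (1 - θ) * ⟪g₀, y - x⟫ + θ * ⟪G, y - x⟫ := by
      rw [inner_add_left, real_inner_smul_left, hw, inner_sub_left]
      ring
    rw [h3]
    nlinarith [mul_le_mul_of_nonneg_left h1 (by linarith : (0:ℝ) ≤ 1 - θ),
      mul_le_mul_of_nonneg_left h2 hθ0.le]
  have hnorm := hmin (g₀ + θ • w) hsub
  have hsq : ‖g₀ + θ • w‖ ^ 2 = K - θ * K + θ ^ 2 * ‖w‖ ^ 2 := by
    rw [norm_add_sq_real, real_inner_smul_right, hinw, norm_smul,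
      Real.norm_eq_abs, abs_of_pos hθ0, mul_pow]
    rw [hK]; ring
  have hsq2 : ‖g₀‖ ^ 2 ≤ ‖g₀ + θ • w‖ ^ 2 :=
    pow_le_pow_left₀ (norm_nonneg _) hnorm 2
  rw [hsq, ← hK] at hsq2
  nlinarith [hθw, mul_le_mul_of_nonneg_left hθw hθ0.le]
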